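/- Fix k ≥ 2. The DFA on state set {1,…,k} over alphabet {a,b,c}, with a acting as the k-cycle (1 2 … k), b as the transposition (1 2), c as the identity, initial state 1 and final set {1,…,k−1}, is minimal; hence the accepting-state complexity of its language is k−1. -/

import Mathlib

/-- Transition function of the quotient automaton: letter 0 acts as the
k-cycle, letter 1 as the transposition (1 2), letter 2 as the identity. -/
def qDelta (k : ℕ) (hk : 2 ≤ k) : Fin k → Fin 3 → Fin k :=
  fun q x =>
    if x = 0 then finRotate k q
    else if x = 1 then Equiv.swap (⟨0, by omega⟩ : Fin k) ⟨1, by omega⟩ q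
    else q

lemma qDelta_zero (k : ℕ) (hk : 2 ≤ k) [NeZero k] (p : Fin k) :
    qDelta k hk p 0 = p + 1 := by
  obtain ⟨n, rfl⟩ : ∃ n, k = n + 1 := ⟨k - 1, by omega⟩
  simp [qDelta, finRotate_succ_apply]

open Fin.NatCast Fin.CommRing in
lemma foldl_rep (k : ℕ) (hk : 2 ≤ k) [NeZero k] (m : ℕ) (p : Fin k) :
    (List.replicate m (0 : Fin 3)).foldl (qDelta k hk) p = p + (m : Fin k) := by
  induction m generalizing p with
  | zero => simp
  | succ m ih =>
    rw [List.replicate_succ, List.foldl_cons, qDelta_zero k hk, ih]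
    push_cast
    ring

open Fin.NatCast Fin.CommRing in
lemma val_foldl_rep (k : ℕ) (hk : 2 ≤ k) [NeZero k] (m : ℕ) (hm : m < k) (p : Fin k) :
    ((List.replicate m (0 : Fin 3)).foldl (qDelta k hk) p).val = (p.val + m) % k := by
  rw [foldl_rep, Fin.val_add, Fin.val_natCast, Nat.mod_eq_of_lt hm]

lemma dist (k : ℕ) (hk : 2 ≤ k) (p q : Fin k) (hne : p ≠ q) :
    ∃ w : List (Fin 3), (w.foldl (qDelta k hk) p).val = k - 1 ∧
      (w.foldl (qDelta k hk) q).val < k - 1 := by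
  haveI : NeZero k := ⟨by omega⟩
  have hp := p.isLt
  have hq := q.isLt
  have hpq : p.val ≠ q.val := fun h => hne (Fin.ext h)
  set m := k - 1 - p.val with hm
  have hmk : m < k := by omega
  refine ⟨List.replicate m 0, ?_, ?_⟩
  · rw [val_foldl_rep k hk m hmk, Nat.mod_eq_of_lt (by omega)]
    omega
  · rw [val_foldl_rep k hk m hmk]
    rcases lt_or_ge (q.val + m) k with h | h
    · rw [Nat.mod_eq_of_lt h]; omega
    · have h2 : q.val + m - k < k := by omega
      rw [Nat.mod_eq_sub_mod h, Nat.mod_eq_of_lt h2]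
      omega

/-- The DFA with final set {1,…,k-1} is minimal, and the accepting-state
complexity of its language is k-1: it has k-1 final states, and every DFA
for the same language has at least k-1 final states. -/
theorem stmt_15 (k : ℕ) (hk : 2 ≤ k) :
    (∀ q : Fin k, ∃ w : List (Fin 3), w.foldl (qDelta k hk) ⟨0, by omega⟩ = q) ∧
      (∀ p q : Fin k, p ≠ q → ∃ w : List (Fin 3),
        ¬(w.foldl (qDelta k hk) p ∈ {x : Fin k | x.val < k - 1} ↔
          w.foldl (qDelta k hk) q ∈ {x : Fin k | x.val < k - 1})) ∧
      ({x : Fin k | x.val < k - 1}).ncard = k - 1 ∧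
      (∀ (Q' : Type) [Fintype Q'] (δ' : Q' → Fin 3 → Q') (s' : Q') (F' : Set Q'),
        {w : List (Fin 3) | w.foldl δ' s' ∈ F'} =
          {w : List (Fin 3) |
            w.foldl (qDelta k hk) ⟨0, by omega⟩ ∈ {x : Fin k | x.val < k - 1}} →
        k - 1 ≤ F'.ncard) := by
  haveI : NeZero k := ⟨by omega⟩
  have start_rep : ∀ m : ℕ, (hm : m < k) →
      (List.replicate m (0 : Fin 3)).foldl (qDelta k hk) ⟨0, by omega⟩ = ⟨m, hm⟩ := by
    intro m hm
    apply Fin.ext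
    rw [val_foldl_rep k hk m hm]
    simp [Nat.mod_eq_of_lt hm]
  refine ⟨?_, ?_, ?_, ?_⟩
  · intro q
    exact ⟨List.replicate q.val 0, by rw [start_rep q.val q.isLt]⟩
  · intro p q hne
    obtain ⟨w, h1, h2⟩ := dist k hk p q hne
    refine ⟨w, ?_⟩
    simp only [Set.mem_setOf_eq]
    intro hiff
    have := hiff.mpr h2
    omega
  · have hset : {x : Fin k | x.val < k - 1} = Set.Iio (⟨k - 1, by omega⟩ : Fin k) := by
      ext x; simp [Fin.lt_def]
    rw [hset, Set.ncard_eq_toFinset_card', Set.toFinset_Iio, Fin.card_Iio]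
  · intro Q' _ δ' s' F' hL
    set f : Fin (k - 1) → Q' := fun i => (List.replicate i.val (0 : Fin 3)).foldl δ' s' with hf
    have hlang : ∀ w : List (Fin 3), w.foldl δ' s' ∈ F' ↔
        (w.foldl (qDelta k hk) ⟨0, by omega⟩).val < k - 1 := by
      intro w
      have := Set.ext_iff.mp hL w
      simpa using this
    have hmem : ∀ i, f i ∈ F' := by
      intro i
      rw [hf]
      simp only
      rw [hlang, start_rep i.val (by omega)]
      exact i.isLt
    have hinj : Function.Injective f := by
      intro i j hij
      by_contra hne
      have hpq : (⟨i.val, by omega⟩ : Fin k) ≠ ⟨j.val, by omega⟩ := by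
        intro h
        exact hne (Fin.ext (by simpa using congrArg Fin.val h))
      obtain ⟨w, h1, h2⟩ := dist k hk ⟨i.val, by omega⟩ ⟨j.val, by omega⟩ hpq
      have hiw : (List.replicate i.val (0 : Fin 3) ++ w).foldl δ' s' ∈ F' ↔
          (List.replicate j.val (0 : Fin 3) ++ w).foldl δ' s' ∈ F' := by
        rw [List.foldl_append, List.foldl_append]
        have : (List.replicate i.val (0 : Fin 3)).foldl δ' s'
            = (List.replicate j.val (0 : Fin 3)).foldl δ' s' := hij
        rw [this]
      rw [hlang, hlang, List.foldl_append, List.foldl_append,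
        start_rep i.val (by omega), start_rep j.val (by omega)] at hiw
      have := hiw.mpr h2
      omega
    have hrange : Set.range f ⊆ F' := Set.range_subset_iff.mpr hmem
    have hcard : (Set.range f).ncard = k - 1 := by
      rw [← Set.image_univ, Set.ncard_image_of_injective _ hinj, Set.ncard_univ]
      simp
    calc k - 1 = (Set.range f).ncard := hcard.symm
      _ ≤ F'.ncard := Set.ncard_le_ncard hrange (Set.toFinite F')
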